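/- The maximum possible number of preference statements in a k-bounded acyclic CP-net over n variables, each of domain size m, equals (n-k)·m^k + (m^k - 1)/(m - 1). Formally: the maximum over all sequences (d_1,...,d_n) of indegrees of an acyclic digraph on n vertices with all indegrees at most k of the sum Σ_i m^{d_i} equals (n-k)·m^k + (m^k-1)/(m-1). -/

import Mathlib

open scoped Classical

lemma geom_nat (m k : ℕ) (hm : 2 ≤ m) :
    (∑ i ∈ Finset.range k, m ^ i) * (m - 1) = m ^ k - 1 := by
  induction k with
  | zero => simp
  | succ k ih =>
    rw [Finset.sum_range_succ, add_mul, ih, pow_succ]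
    have h1 : 1 ≤ m ^ k := Nat.one_le_pow _ _ (by omega)
    have h2 : m ^ k ≤ m ^ k * m := Nat.le_mul_of_pos_right _ (by omega)
    zify [show 1 ≤ m by omega, h1, le_trans h1 h2]
    ring

lemma sum_min_eq (n m k : ℕ) (hm : 2 ≤ m) (hk : k < n) :
    ∑ i ∈ Finset.range n, m ^ min i k = (n - k) * m ^ k + (m ^ k - 1) / (m - 1) := by
  rw [Finset.range_eq_Ico, ← Finset.sum_Ico_consecutive _ (Nat.zero_le k) hk.le,
    ← Finset.range_eq_Ico]
  have h1 : ∑ i ∈ Finset.range k, m ^ min i k = ∑ i ∈ Finset.range k, m ^ i :=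
    Finset.sum_congr rfl fun i hi => by
      rw [min_eq_left (le_of_lt (Finset.mem_range.mp hi))]
  have h2 : ∑ i ∈ Finset.Ico k n, m ^ min i k = (n - k) * m ^ k := by
    rw [Finset.sum_congr rfl fun i hi => by
      rw [min_eq_right (Finset.mem_Ico.mp hi).1]]
    simp [Finset.sum_const, Nat.card_Ico]
  rw [h1, h2, Nat.add_comm]
  congr 1
  exact (Nat.div_eq_of_eq_mul_left (by omega) (geom_nat m k hm).symm).symm

lemma card_pred (n k : ℕ) (v : Fin n) :
    (Finset.univ.filter fun u : Fin n => (u : ℕ) < v ∧ (v : ℕ) ≤ u + k).card = min (v : ℕ) k := by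
  have hb : (Finset.univ.filter fun u : Fin n => (u : ℕ) < v ∧ (v : ℕ) ≤ u + k).card
      = (Finset.Ico ((v : ℕ) - k) (v : ℕ)).card := by
    apply Finset.card_bij (fun (u : Fin n) _ => (u : ℕ))
    · intro u hu
      simp only [Finset.mem_filter] at hu
      simp only [Finset.mem_Ico]
      omega
    · intro a _ b _ hab
      exact Fin.val_injective hab
    · intro a ha
      simp only [Finset.mem_Ico] at ha
      refine ⟨⟨a, by omega⟩, ?_, rfl⟩
      simp only [Finset.mem_filter, Finset.mem_univ, true_and]
      omega
  rw [hb, Nat.card_Ico]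
  omega

/-- the maximum weight `∑ v, m ^ indegree(v)` over acyclic digraphs on
`n` vertices with all indegrees at most `k` equals `(n-k)·m^k + (m^k-1)/(m-1)`. -/
theorem stmt0 (n m k : ℕ) (hn : 1 ≤ n) (hm : 2 ≤ m) (hk : k ≤ n - 1) :
    IsGreatest
      { S : ℕ | ∃ r : Fin n → Fin n → Prop,
          (∀ v, ¬ Relation.TransGen r v v) ∧
          (∀ v : Fin n, (Finset.univ.filter fun u => r u v).card ≤ k) ∧
          S = ∑ v : Fin n, m ^ (Finset.univ.filter fun u => r u v).card }
      ((n - k) * m ^ k + (m ^ k - 1) / (m - 1)) := by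
  have hkn : k < n := by omega
  constructor
  · -- membership: the witness digraph
    refine ⟨fun u v => (u : ℕ) < v ∧ (v : ℕ) ≤ u + k, ?_, ?_, ?_⟩
    · intro v hv
      have : ∀ u w : Fin n,
          Relation.TransGen (fun u v : Fin n => (u : ℕ) < v ∧ (v : ℕ) ≤ u + k) u w →
          (u : ℕ) < w := by
        intro u w h
        induction h with
        | single h => exact h.1
        | tail _ h ih => exact lt_trans ih h.1
      exact lt_irrefl _ (this v v hv)
    · intro v
      refine le_trans (le_of_eq ?_) (min_le_right (v : ℕ) k)
      convert card_pred n k v using 2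
      ext u
      simp
    · have hbase : ∑ v : Fin n, m ^ min (v : ℕ) k
          = (n - k) * m ^ k + (m ^ k - 1) / (m - 1) := by
        rw [Fin.sum_univ_eq_sum_range (fun i => m ^ min i k) n]
        exact sum_min_eq n m k hm hkn
      refine Eq.symm (Eq.trans ?_ hbase)
      refine Finset.sum_congr rfl fun v _ => ?_
      congr 1
      convert card_pred n k v using 2
      ext u
      simp
  · -- upper bound
    rintro S ⟨r, hac, hdeg, rfl⟩
    set rank : Fin n → ℕ :=
      fun v => (Finset.univ.filter fun u => Relation.TransGen r u v).card with hrank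
    have hrank_lt : ∀ u v, Relation.TransGen r u v → rank u < rank v := by
      intro u v h
      apply Finset.card_lt_card
      constructor
      · intro w hw
        simp only [Finset.mem_filter, Finset.mem_univ, true_and] at hw ⊢
        exact hw.trans h
      · intro hsub
        have hu : u ∈ Finset.univ.filter fun w => Relation.TransGen r w v := by
          simp only [Finset.mem_filter, Finset.mem_univ, true_and]; exact h
        have := hsub hu
        simp only [Finset.mem_filter, Finset.mem_univ, true_and] at this
        exact hac u this
    have hdeg_rank : ∀ v, (Finset.univ.filter fun u => r u v).card ≤ rank v := by
      intro v
      apply Finset.card_le_card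
      intro u hu
      simp only [Finset.mem_filter, Finset.mem_univ, true_and] at hu ⊢
      exact Relation.TransGen.single hu
    set σ := Tuple.sort rank with hσ
    have hmono : Monotone (rank ∘ σ) := Tuple.monotone_sort rank
    have hkey : ∀ i : Fin n, rank (σ i) ≤ (i : ℕ) := by
      intro i
      have hinj : (Finset.univ.filter fun u => Relation.TransGen r u (σ i)).card
          ≤ (Finset.Iio i).card := by
        apply Finset.card_le_card_of_injOn (fun u => σ.symm u)
        · intro u hu
          simp only [Finset.mem_coe, Finset.mem_filter, Finset.mem_univ, true_and] at hu
          have h1 : rank u < rank (σ i) := hrank_lt _ _ hu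
          simp only [Finset.mem_coe, Finset.mem_Iio]
          by_contra hle
          push_neg at hle
          have := hmono hle
          simp only [Function.comp_apply, Equiv.apply_symm_apply] at this
          omega
        · intro a _ b _ hab
          exact σ.symm.injective hab
      rwa [Fin.card_Iio] at hinj
    calc ∑ v : Fin n, m ^ (Finset.univ.filter fun u => r u v).card
        = ∑ i : Fin n, m ^ (Finset.univ.filter fun u => r u (σ i)).card :=
          (Equiv.sum_comp σ _).symm
      _ ≤ ∑ i : Fin n, m ^ min (i : ℕ) k := by
          apply Finset.sum_le_sum
          intro i _
          apply Nat.pow_le_pow_right (by omega)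
          exact le_min (le_trans (hdeg_rank _) (hkey i)) (hdeg _)
      _ = ∑ i ∈ Finset.range n, m ^ min i k :=
          Fin.sum_univ_eq_sum_range (fun i => m ^ min i k) n
      _ = (n - k) * m ^ k + (m ^ k - 1) / (m - 1) := sum_min_eq n m k hm hkn
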